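/- Let d ≥ 1. If A is a d×d factorisable bistochastic matrix and B is a d×d bracelet bistochastic matrix, then both products AB and BA are bracelet bistochastic matrices. -/

import Mathlib

open Real Finset Matrix

/-- A `d × d` real matrix is bistochastic (doubly stochastic) if all its entries are
non-negative and each row and each column sums to `1`. -/
def Bistochastic {d : ℕ} (B : Matrix (Fin d) (Fin d) ℝ) : Prop :=
  (∀ j k, 0 ≤ B j k) ∧ (∀ j, ∑ k, B j k = 1) ∧ (∀ k, ∑ j, B j k = 1)

/-- A bistochastic matrix is bracelet if for every pair of columns `k, l` and every `j₀`,
`2 √(B j₀ k * B j₀ l) ≤ ∑ j, √(B j k * B j l)` (equivalently, twice the maximum is at most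
the sum), and the analogous condition holds for every pair of rows. -/
def Bracelet {d : ℕ} (B : Matrix (Fin d) (Fin d) ℝ) : Prop :=
  Bistochastic B ∧
  (∀ k l j₀ : Fin d, 2 * Real.sqrt (B j₀ k * B j₀ l) ≤ ∑ j, Real.sqrt (B j k * B j l)) ∧
  (∀ j k l₀ : Fin d, 2 * Real.sqrt (B j l₀ * B k l₀) ≤ ∑ l, Real.sqrt (B j l * B k l))

/-- A `d × d` bistochastic matrix `E` is elementary if `E k k = 1` for at least `d - 2`
indices `k`. -/
def Elementary {d : ℕ} (E : Matrix (Fin d) (Fin d) ℝ) : Prop :=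
  Bistochastic E ∧ ∃ S : Finset (Fin d), d - 2 ≤ S.card ∧ ∀ k ∈ S, E k k = 1

/-- The set `F_d` of factorisable bistochastic matrices: the topological closure of the set
of finite products of elementary bistochastic matrices (the identity being the empty
product). -/
def Factorisable {d : ℕ} (B : Matrix (Fin d) (Fin d) ℝ) : Prop :=
  B ∈ closure { M : Matrix (Fin d) (Fin d) ℝ |
    ∃ L : List (Matrix (Fin d) (Fin d) ℝ), (∀ E ∈ L, Elementary E) ∧ M = L.prod }

/- ### Auxiliary lemmas -/

/-- Triangle inequality in ℝ², written with square roots. -/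
lemma tri2 (x y A B : ℝ) :
    Real.sqrt ((x+A)^2+(y+B)^2) ≤ Real.sqrt (x^2+y^2) + Real.sqrt (A^2+B^2) := by
  have cs : x*A + y*B ≤ Real.sqrt (x^2+y^2) * Real.sqrt (A^2+B^2) := by
    have h2 : (x*A+y*B)^2 ≤ (x^2+y^2)*(A^2+B^2) := by nlinarith [sq_nonneg (x*B - y*A)]
    calc x*A+y*B ≤ |x*A+y*B| := le_abs_self _
      _ = Real.sqrt ((x*A+y*B)^2) := (Real.sqrt_sq_eq_abs _).symm
      _ ≤ Real.sqrt ((x^2+y^2)*(A^2+B^2)) := Real.sqrt_le_sqrt h2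
      _ = Real.sqrt (x^2+y^2)*Real.sqrt (A^2+B^2) := Real.sqrt_mul (by positivity) _
  have h1 : (x+A)^2+(y+B)^2 ≤ (Real.sqrt (x^2+y^2)+Real.sqrt (A^2+B^2))^2 := by
    nlinarith [Real.sq_sqrt (show (0:ℝ) ≤ x^2+y^2 by positivity),
      Real.sq_sqrt (show (0:ℝ) ≤ A^2+B^2 by positivity)]
  calc Real.sqrt ((x+A)^2+(y+B)^2) ≤ Real.sqrt ((Real.sqrt (x^2+y^2)+Real.sqrt (A^2+B^2))^2) :=
        Real.sqrt_le_sqrt h1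
    _ = _ := Real.sqrt_sq (by positivity)

/-- 2D Minkowski inequality for finite sums. -/
lemma minkowski2 {ι : Type*} (s : Finset ι) (a b : ι → ℝ) :
    Real.sqrt ((∑ i ∈ s, a i)^2 + (∑ i ∈ s, b i)^2) ≤ ∑ i ∈ s, Real.sqrt (a i^2 + b i^2) := by
  induction s using Finset.cons_induction with
  | empty => simp
  | cons c s hc ih =>
    rw [Finset.sum_cons, Finset.sum_cons, Finset.sum_cons]
    calc Real.sqrt ((a c + ∑ i ∈ s, a i)^2 + (b c + ∑ i ∈ s, b i)^2)
        ≤ Real.sqrt (a c^2 + b c^2) + Real.sqrt ((∑ i ∈ s, a i)^2 + (∑ i ∈ s, b i)^2) := tri2 _ _ _ _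
      _ ≤ _ := by linarith

/-- The pairwise "max at most half the sum" condition between two nonnegative vectors. -/
def Cond {d : ℕ} (u v : Fin d → ℝ) : Prop :=
  ∀ l₀, 2 * Real.sqrt (u l₀ * v l₀) ≤ ∑ l, Real.sqrt (u l * v l)

lemma cond_symm {d : ℕ} {u v : Fin d → ℝ} (h : Cond u v) : Cond v u := by
  intro l₀
  simpa only [mul_comm] using h l₀

lemma cond_mix {d : ℕ} (t s : ℝ) (ht : 0 ≤ t) (hs : 0 ≤ s)
    {u x y : Fin d → ℝ} (hu : ∀ i, 0 ≤ u i) (hx : ∀ i, 0 ≤ x i) (hy : ∀ i, 0 ≤ y i)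
    (h1 : Cond u x) (h2 : Cond u y) :
    Cond u (fun l => t * x l + s * y l) := by
  intro l₀
  have key : ∀ l, Real.sqrt (u l * (t * x l + s * y l))
      = Real.sqrt ((Real.sqrt t * Real.sqrt (u l * x l))^2 + (Real.sqrt s * Real.sqrt (u l * y l))^2) := by
    intro l
    congr 1
    rw [mul_pow, mul_pow, Real.sq_sqrt ht, Real.sq_sqrt hs,
      Real.sq_sqrt (mul_nonneg (hu l) (hx l)), Real.sq_sqrt (mul_nonneg (hu l) (hy l))]
    ring
  simp only [key]
  have h2l : 2 * Real.sqrt ((Real.sqrt t * Real.sqrt (u l₀ * x l₀))^2 + (Real.sqrt s * Real.sqrt (u l₀ * y l₀))^2)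
      ≤ Real.sqrt ((Real.sqrt t * ∑ l, Real.sqrt (u l * x l))^2 + (Real.sqrt s * ∑ l, Real.sqrt (u l * y l))^2) := by
    have h4 : Real.sqrt (4:ℝ) = 2 := by
      rw [show (4:ℝ) = 2^2 by norm_num, Real.sqrt_sq (by norm_num : (0:ℝ) ≤ 2)]
    have e0 : (2:ℝ) * Real.sqrt ((Real.sqrt t * Real.sqrt (u l₀ * x l₀))^2 + (Real.sqrt s * Real.sqrt (u l₀ * y l₀))^2)
        = Real.sqrt (4 * ((Real.sqrt t * Real.sqrt (u l₀ * x l₀))^2 + (Real.sqrt s * Real.sqrt (u l₀ * y l₀))^2)) := by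
      rw [Real.sqrt_mul (by norm_num : (0:ℝ) ≤ 4), h4]
    rw [e0]
    apply Real.sqrt_le_sqrt
    have e1 : 2 * Real.sqrt (u l₀ * x l₀) ≤ ∑ l, Real.sqrt (u l * x l) := h1 l₀
    have e2 : 2 * Real.sqrt (u l₀ * y l₀) ≤ ∑ l, Real.sqrt (u l * y l) := h2 l₀
    have n1 : (0:ℝ) ≤ Real.sqrt t := Real.sqrt_nonneg t
    have n2 : (0:ℝ) ≤ Real.sqrt s := Real.sqrt_nonneg s
    have n3 : (0:ℝ) ≤ Real.sqrt (u l₀ * x l₀) := Real.sqrt_nonneg _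
    have n4 : (0:ℝ) ≤ Real.sqrt (u l₀ * y l₀) := Real.sqrt_nonneg _
    nlinarith [mul_le_mul_of_nonneg_left e1 n1, mul_le_mul_of_nonneg_left e2 n2,
      mul_nonneg n1 n3, mul_nonneg n2 n4]
  refine h2l.trans ?_
  have := minkowski2 (Finset.univ) (fun l => Real.sqrt t * Real.sqrt (u l * x l))
    (fun l => Real.sqrt s * Real.sqrt (u l * y l))
  simpa [Finset.mul_sum] using this

set_option maxHeartbeats 1600000 in
/-- Column condition preserved when two coordinates are mixed bistochastically. -/
lemma col_key {d : ℕ} (t : ℝ) (ht : 0 ≤ t) (ht1 : t ≤ 1) {a b : Fin d} (hab : a ≠ b)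
    {c c' : Fin d → ℝ} (hc : ∀ j, 0 ≤ c j) (hc' : ∀ j, 0 ≤ c' j)
    (H : ∀ j₀, 2 * Real.sqrt (c j₀ * c' j₀) ≤ ∑ j, Real.sqrt (c j * c' j)) :
    ∀ j₀, 2 * Real.sqrt
        ((if j₀ = a then t * c a + (1-t) * c b else if j₀ = b then (1-t) * c a + t * c b else c j₀) *
         (if j₀ = a then t * c' a + (1-t) * c' b else if j₀ = b then (1-t) * c' a + t * c' b else c' j₀))
      ≤ ∑ j, Real.sqrt
        ((if j = a then t * c a + (1-t) * c b else if j = b then (1-t) * c a + t * c b else c j) *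
         (if j = a then t * c' a + (1-t) * c' b else if j = b then (1-t) * c' a + t * c' b else c' j)) := by
  have hs : (0:ℝ) ≤ 1 - t := by linarith
  set s : ℝ := 1 - t with hs_def
  set f : Fin d → ℝ := fun j => Real.sqrt (c j * c' j) with hf
  set g : Fin d → ℝ := fun j => Real.sqrt
        ((if j = a then t * c a + s * c b else if j = b then s * c a + t * c b else c j) *
         (if j = a then t * c' a + s * c' b else if j = b then s * c' a + t * c' b else c' j)) with hg
  have fnn : ∀ j, 0 ≤ f j := fun j => Real.sqrt_nonneg _
  have gnn : ∀ j, 0 ≤ g j := fun j => Real.sqrt_nonneg _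
  have hga : g a = Real.sqrt ((t * c a + s * c b) * (t * c' a + s * c' b)) := by
    simp [hg]
  have hgb : g b = Real.sqrt ((s * c a + t * c b) * (s * c' a + t * c' b)) := by
    simp [hg, hab, Ne.symm hab]
  have hgoff : ∀ j, j ≠ a → j ≠ b → g j = f j := by
    intro j hja hjb; simp [hg, hf, hja, hjb]
  have e_goal : ∀ j, Real.sqrt
        ((if j = a then t * c a + s * c b else if j = b then s * c a + t * c b else c j) *
         (if j = a then t * c' a + s * c' b else if j = b then s * c' a + t * c' b else c' j)) = g j := by
    intro j; rw [hg]
  have Hf : ∀ j₀, 2 * f j₀ ≤ ∑ j, f j := by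
    intro j₀
    have h := H j₀
    simp only [hf] at h ⊢
    exact h
  have n1 : (0:ℝ) ≤ t * c a + s * c b := add_nonneg (mul_nonneg ht (hc a)) (mul_nonneg hs (hc b))
  have n2 : (0:ℝ) ≤ t * c' a + s * c' b := add_nonneg (mul_nonneg ht (hc' a)) (mul_nonneg hs (hc' b))
  have n3 : (0:ℝ) ≤ s * c a + t * c b := add_nonneg (mul_nonneg hs (hc a)) (mul_nonneg ht (hc b))
  have n4 : (0:ℝ) ≤ s * c' a + t * c' b := add_nonneg (mul_nonneg hs (hc' a)) (mul_nonneg ht (hc' b))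
  have efa : f a ^ 2 = c a * c' a := Real.sq_sqrt (mul_nonneg (hc a) (hc' a))
  have efb : f b ^ 2 = c b * c' b := Real.sq_sqrt (mul_nonneg (hc b) (hc' b))
  have ega : g a ^ 2 = (t * c a + s * c b) * (t * c' a + s * c' b) := by
    rw [hga]; exact Real.sq_sqrt (mul_nonneg n1 n2)
  have egb : g b ^ 2 = (s * c a + t * c b) * (s * c' a + t * c' b) := by
    rw [hgb]; exact Real.sq_sqrt (mul_nonneg n3 n4)
  have cross : 2 * (f a * f b) ≤ c a * c' b + c b * c' a := by
    have m3 : Real.sqrt (c a * c' b) * Real.sqrt (c b * c' a) = f a * f b := by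
      rw [← Real.sqrt_mul (mul_nonneg (hc a) (hc' b)), hf]
      rw [← Real.sqrt_mul (mul_nonneg (hc a) (hc' a))]
      congr 1; ring
    nlinarith [sq_nonneg (Real.sqrt (c a * c' b) - Real.sqrt (c b * c' a)),
      Real.sq_sqrt (mul_nonneg (hc a) (hc' b)), Real.sq_sqrt (mul_nonneg (hc b) (hc' a))]
  clear_value s f g
  have hcross : (0:ℝ) ≤ t * s * (c a * c' b + c b * c' a - 2 * (f a * f b)) :=
    mul_nonneg (mul_nonneg ht hs) (by linarith)
  have ht2 : t^2 * (f a ^ 2) = t^2 * (c a * c' a) := by rw [efa]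
  have hs2 : s^2 * (f b ^ 2) = s^2 * (c b * c' b) := by rw [efb]
  have ht2' : t^2 * (f b ^ 2) = t^2 * (c b * c' b) := by rw [efb]
  have hs2' : s^2 * (f a ^ 2) = s^2 * (c a * c' a) := by rw [efa]
  have lga : t * f a + s * f b ≤ g a := by
    rw [hga, ← Real.sqrt_sq (add_nonneg (mul_nonneg ht (fnn a)) (mul_nonneg hs (fnn b)))]
    apply Real.sqrt_le_sqrt
    nlinarith [hcross, ht2, hs2]
  have lgb : s * f a + t * f b ≤ g b := by
    rw [hgb, ← Real.sqrt_sq (add_nonneg (mul_nonneg hs (fnn a)) (mul_nonneg ht (fnn b)))]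
    apply Real.sqrt_le_sqrt
    nlinarith [hcross, ht2', hs2']
  have sumfg : f a + f b ≤ g a + g b := by
    have e : t * f a + s * f b + (s * f a + t * f b) = f a + f b := by
      rw [hs_def]; ring
    linarith
  have habs : |g a - g b| ≤ |f a - f b| := by
    have hsq0 : g a ^2 - g b ^2 = (t^2 - s^2) * (f a ^2 - f b ^2) := by
      rw [ega, egb, efa, efb]; ring
    have hsq : (g a - g b) * (g a + g b) = (t^2 - s^2) * ((f a - f b) * (f a + f b)) := by
      linear_combination hsq0
    rcases eq_or_lt_of_le (add_nonneg (gnn a) (gnn b)) with h0 | h0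
    · have ha0 : g a = 0 := by linarith [gnn a, gnn b]
      have hb0 : g b = 0 := by linarith [gnn a, gnn b]
      rw [ha0, hb0]; simpa using abs_nonneg _
    · have hts : |t^2 - s^2| ≤ 1 := by
        rw [abs_le, hs_def]; constructor <;> nlinarith
      have step : |g a - g b| * (g a + g b) ≤ |f a - f b| * (g a + g b) := by
        have e1 : |g a - g b| * (g a + g b) = |(g a - g b) * (g a + g b)| := by
          rw [abs_mul, abs_of_nonneg (add_nonneg (gnn a) (gnn b))]
        rw [e1, hsq, abs_mul, abs_mul]
        calc |t^2 - s^2| * (|f a - f b| * |f a + f b|)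
            ≤ 1 * (|f a - f b| * |f a + f b|) :=
              mul_le_mul_of_nonneg_right hts (mul_nonneg (abs_nonneg _) (abs_nonneg _))
          _ = |f a - f b| * |f a + f b| := by ring
          _ = |f a - f b| * (f a + f b) := by rw [abs_of_nonneg (add_nonneg (fnn a) (fnn b))]
          _ ≤ |f a - f b| * (g a + g b) := mul_le_mul_of_nonneg_left sumfg (abs_nonneg _)
      exact le_of_mul_le_mul_right step h0
  have hsum : ∀ (h : Fin d → ℝ), ∑ j, h j = h a + h b + ∑ j ∈ (Finset.univ.erase a).erase b, h j := by
    intro h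
    rw [← Finset.add_sum_erase _ h (Finset.mem_univ a),
      ← Finset.add_sum_erase _ h (Finset.mem_erase.2 ⟨Ne.symm hab, Finset.mem_univ b⟩)]
    ring
  have hrest : ∑ j ∈ (Finset.univ.erase a).erase b, g j = ∑ j ∈ (Finset.univ.erase a).erase b, f j := by
    apply Finset.sum_congr rfl
    intro j hj
    have hjb : j ≠ b := (Finset.mem_erase.1 hj).1
    have hja : j ≠ a := (Finset.mem_erase.1 (Finset.mem_erase.1 hj).2).1
    exact hgoff j hja hjb
  have sumg_eq : ∑ j, g j = g a + g b + (∑ j, f j - f a - f b) := by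
    rw [hsum g, hsum f, hrest]; ring
  intro j₀
  rw [e_goal j₀]
  show 2 * g j₀ ≤ ∑ j, g j
  have Ha : 2 * f a ≤ ∑ j, f j := Hf a
  have Hb : 2 * f b ≤ ∑ j, f j := Hf b
  have habs' : |f a - f b| ≤ ∑ j, f j - f a - f b := by
    rw [abs_le]; constructor <;> linarith
  by_cases hja : j₀ = a
  · subst hja
    have h2 := le_abs_self (g j₀ - g b)
    rw [sumg_eq]; linarith [habs.trans habs']
  · by_cases hjb : j₀ = b
    · subst hjb
      have h2 := le_abs_self (g j₀ - g a)
      rw [abs_sub_comm] at habs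
      rw [sumg_eq]; linarith [habs.trans habs', h2]
    · rw [hgoff j₀ hja hjb, sumg_eq]
      linarith [Hf j₀]

lemma bistochastic_mul {d : ℕ} {A B : Matrix (Fin d) (Fin d) ℝ}
    (hA : Bistochastic A) (hB : Bistochastic B) : Bistochastic (A * B) := by
  obtain ⟨ha1, ha2, ha3⟩ := hA
  obtain ⟨hb1, hb2, hb3⟩ := hB
  refine ⟨fun j k => ?_, fun j => ?_, fun k => ?_⟩
  · rw [Matrix.mul_apply]
    exact Finset.sum_nonneg fun m _ => mul_nonneg (ha1 j m) (hb1 m k)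
  · simp only [Matrix.mul_apply]
    rw [Finset.sum_comm]
    calc ∑ m, ∑ k, A j m * B m k = ∑ m, A j m * ∑ k, B m k := by
          simp [Finset.mul_sum]
      _ = 1 := by simp only [hb2, mul_one]; exact ha2 j
  · simp only [Matrix.mul_apply]
    rw [Finset.sum_comm]
    calc ∑ m, ∑ j, A j m * B m k = ∑ m, (∑ j, A j m) * B m k := by
          simp [Finset.sum_mul]
      _ = 1 := by simp only [ha3, one_mul]; exact hb3 k

lemma sum_two {d : ℕ} {a b : Fin d} (hab : a ≠ b) (f : Fin d → ℝ)
    (hz : ∀ m, m ≠ a → m ≠ b → f m = 0) : ∑ m, f m = f a + f b := by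
  have hsub : ({a, b} : Finset (Fin d)) ⊆ Finset.univ := Finset.subset_univ _
  rw [← Finset.sum_subset hsub (fun x _ hx => by
    simp only [Finset.mem_insert, Finset.mem_singleton, not_or] at hx
    exact hz x hx.1 hx.2)]
  exact Finset.sum_pair hab

lemma elem_structure {d : ℕ} (E : Matrix (Fin d) (Fin d) ℝ) (hE : Elementary E) :
    E = 1 ∨ ∃ (a b : Fin d) (t : ℝ), a ≠ b ∧ 0 ≤ t ∧ t ≤ 1 ∧
      ∀ i j, E i j = (if i = a then (if j = a then t else if j = b then 1-t else 0)
        else if i = b then (if j = a then 1-t else if j = b then t else 0)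
        else if i = j then 1 else 0) := by
  obtain ⟨⟨hnn, hrow, hcol⟩, S, hcard, hdiag⟩ := hE
  have hrow0 : ∀ k ∈ S, ∀ j, j ≠ k → E k j = 0 := by
    intro k hk j hj
    have h1 : ∑ m ∈ Finset.univ.erase k, E k m = 0 := by
      rw [Finset.sum_erase_eq_sub (Finset.mem_univ k), hrow k, hdiag k hk]
      ring
    exact (Finset.sum_eq_zero_iff_of_nonneg (fun m _ => hnn k m)).1 h1 j
      (Finset.mem_erase.2 ⟨hj, Finset.mem_univ j⟩)
  have hcol0 : ∀ k ∈ S, ∀ j, j ≠ k → E j k = 0 := by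
    intro k hk j hj
    have h1 : ∑ m ∈ Finset.univ.erase k, E m k = 0 := by
      rw [Finset.sum_erase_eq_sub (Finset.mem_univ k), hcol k, hdiag k hk]
      ring
    exact (Finset.sum_eq_zero_iff_of_nonneg (fun m _ => hnn m k)).1 h1 j
      (Finset.mem_erase.2 ⟨hj, Finset.mem_univ j⟩)
  have hScard : Sᶜ.card ≤ 2 := by
    have h1 : Sᶜ.card = d - S.card := by
      rw [Finset.card_compl, Fintype.card_fin]
    have h2 : S.card ≤ d := by
      have := Finset.card_le_card (Finset.subset_univ S)
      simpa using this
    omega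
  by_cases hc2 : Sᶜ.card ≤ 1
  · left
    ext i j
    by_cases hij : i = j
    · subst hij
      by_cases hiS : i ∈ S
      · rw [hdiag i hiS]; simp [Matrix.one_apply]
      · have hall : ∀ j, j ≠ i → E i j = 0 := by
          intro j hj
          have hjS : j ∈ S := by
            by_contra hjS
            have hsub : ({i, j} : Finset (Fin d)) ⊆ Sᶜ := by
              intro x hx
              rcases Finset.mem_insert.1 hx with h | h
              · subst h; exact Finset.mem_compl.2 hiS
              · rw [Finset.mem_singleton.1 h]; exact Finset.mem_compl.2 hjS
            have := Finset.card_le_card hsub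
            rw [Finset.card_pair (Ne.symm hj)] at this
            omega
          exact hcol0 j hjS i (Ne.symm hj)
        have : E i i = 1 := by
          have h3 : ∑ m ∈ Finset.univ.erase i, E i m = 0 :=
            Finset.sum_eq_zero (fun m hm => hall m (Finset.mem_erase.1 hm).1)
          rw [Finset.sum_erase_eq_sub (Finset.mem_univ i), hrow i] at h3
          linarith
        rw [this]; simp [Matrix.one_apply]
    · by_cases hiS : i ∈ S
      · rw [hrow0 i hiS j (Ne.symm hij)]; simp [Matrix.one_apply, hij]
      · by_cases hjS : j ∈ S
        · rw [hcol0 j hjS i hij]; simp [Matrix.one_apply, hij]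
        · exfalso
          have hsub : ({i, j} : Finset (Fin d)) ⊆ Sᶜ := by
            intro x hx
            rcases Finset.mem_insert.1 hx with h | h
            · subst h; exact Finset.mem_compl.2 hiS
            · rw [Finset.mem_singleton.1 h]; exact Finset.mem_compl.2 hjS
          have := Finset.card_le_card hsub
          rw [Finset.card_pair hij] at this
          omega
  · right
    have hc2' : Sᶜ.card = 2 := by omega
    obtain ⟨a, b, hab, hS⟩ := Finset.card_eq_two.1 hc2'
    have haS : a ∉ S := by
      have : a ∈ Sᶜ := by rw [hS]; simp
      exact Finset.mem_compl.1 this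
    have hbS : b ∉ S := by
      have : b ∈ Sᶜ := by rw [hS]; simp
      exact Finset.mem_compl.1 this
    have hmem : ∀ x, x ≠ a → x ≠ b → x ∈ S := by
      intro x hxa hxb
      by_contra hx
      have : x ∈ Sᶜ := Finset.mem_compl.2 hx
      rw [hS] at this
      rcases Finset.mem_insert.1 this with h | h
      · exact hxa h
      · exact hxb (Finset.mem_singleton.1 h)
    refine ⟨a, b, E a a, hab, hnn a a, ?_, ?_⟩
    · have h2 : ∑ m ∈ Finset.univ.erase a, E a m = 1 - E a a := by
        rw [Finset.sum_erase_eq_sub (Finset.mem_univ a), hrow a]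
      have h3 : 0 ≤ ∑ m ∈ Finset.univ.erase a, E a m :=
        Finset.sum_nonneg (fun m _ => hnn a m)
      linarith
    · have hrowa : ∀ j, j ≠ a → j ≠ b → E a j = 0 := fun j hja hjb =>
        hcol0 j (hmem j hja hjb) a (fun h => haS (h ▸ hmem j hja hjb))
      have hrowb : ∀ j, j ≠ a → j ≠ b → E b j = 0 := fun j hja hjb =>
        hcol0 j (hmem j hja hjb) b (fun h => hbS (h ▸ hmem j hja hjb))
      have hcola : ∀ i, i ≠ a → i ≠ b → E i a = 0 := fun i hia hib =>
        hrow0 i (hmem i hia hib) a (Ne.symm hia)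
      have hcolb : ∀ i, i ≠ a → i ≠ b → E i b = 0 := fun i hia hib =>
        hrow0 i (hmem i hia hib) b (Ne.symm hib)
      have hra : E a a + E a b = 1 := by
        have := hrow a
        rwa [sum_two hab (fun m => E a m) (fun m h1 h2 => hrowa m h1 h2)] at this
      have hrb : E b a + E b b = 1 := by
        have := hrow b
        rwa [sum_two hab (fun m => E b m) (fun m h1 h2 => hrowb m h1 h2)] at this
      have hca : E a a + E b a = 1 := by
        have := hcol a
        rwa [sum_two hab (fun m => E m a) (fun m h1 h2 => hcola m h1 h2)] at this
      intro i j
      by_cases hia : i = a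
      · by_cases hja : j = a
        · rw [hia, hja]; simp
        · by_cases hjb : j = b
          · rw [hia, hjb]; simp [Ne.symm hab]; linarith
          · rw [hia]; simp [hja, hjb]; exact hrowa j hja hjb
      · by_cases hib : i = b
        · by_cases hja : j = a
          · rw [hib, hja]; simp [hab, Ne.symm hab]; linarith
          · by_cases hjb : j = b
            · rw [hib, hjb]; simp [hab, Ne.symm hab]; linarith
            · rw [hib]; simp [Ne.symm hab, hja, hjb]; exact hrowb j hja hjb
        · simp only [if_neg hia, if_neg hib]
          by_cases hij : i = j
          · rw [if_pos hij, ← hij]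
            exact hdiag i (hmem i hia hib)
          · rw [if_neg hij]
            by_cases hja : j = a
            · rw [hja]; exact hcola i hia hib
            · by_cases hjb : j = b
              · rw [hjb]; exact hcolb i hia hib
              · exact hrow0 i (hmem i hia hib) j (Ne.symm hij)

/-- Left multiplication by an elementary matrix preserves the bracelet property. -/
lemma elem_left {d : ℕ} {E B : Matrix (Fin d) (Fin d) ℝ}
    (hE : Elementary E) (hB : Bracelet B) : Bracelet (E * B) := by
  rcases elem_structure E hE with h1 | ⟨a, b, t, hab, ht, ht1, hform⟩
  · rw [h1, one_mul]; exact hB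
  obtain ⟨⟨hBnn, hBrow, hBcol⟩, hBcolcond, hBrowcond⟩ := hB
  have hM : ∀ i l, (E * B) i l =
      (if i = a then t * B a l + (1-t) * B b l
       else if i = b then (1-t) * B a l + t * B b l else B i l) := by
    intro i l
    rw [Matrix.mul_apply]
    by_cases hia : i = a
    · rw [if_pos hia]
      rw [sum_two hab (fun m => E i m * B m l) (fun m h1 h2 => by
        show E i m * B m l = 0
        rw [hform i m]
        simp [hia, h1, h2, Ne.symm h1])]
      rw [hform i a, hform i b]
      simp [hia, hab, Ne.symm hab]
    · rw [if_neg hia]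
      by_cases hib : i = b
      · rw [if_pos hib]
        rw [sum_two hab (fun m => E i m * B m l) (fun m h1 h2 => by
          show E i m * B m l = 0
          rw [hform i m]
          simp [hia, hib, h1, h2, Ne.symm h2])]
        rw [hform i a, hform i b]
        simp [hia, hib, hab, Ne.symm hab]
      · rw [if_neg hib]
        rw [Finset.sum_eq_single i (fun m _ hmi => by
          show E i m * B m l = 0
          rw [hform i m]
          simp only [if_neg hia, if_neg hib, if_neg (Ne.symm hmi)]
          ring) (by simp)]
        rw [hform i i]
        simp [hia, hib]
  have hMnn : ∀ i l, 0 ≤ (E * B) i l := (bistochastic_mul hE.1 ⟨hBnn, hBrow, hBcol⟩).1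
  refine ⟨bistochastic_mul hE.1 ⟨hBnn, hBrow, hBcol⟩, ?_, ?_⟩
  · -- column condition via col_key
    intro k l j₀
    simp only [hM]
    exact col_key t ht ht1 hab (fun j => hBnn j k) (fun j => hBnn j l)
      (fun j₀' => hBcolcond k l j₀') j₀
  · -- row condition via cond_mix
    have condB : ∀ i k, Cond (fun l => B i l) (fun l => B k l) := fun i k l₀ => hBrowcond i k l₀
    have h1 : ∀ i k, Cond (fun l => B i l) (fun l => (E * B) k l) := by
      intro i k
      by_cases hk : k = a
      · have he : (fun l => (E * B) k l) = (fun l => t * B a l + (1-t) * B b l) := by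
          funext l; rw [hM k l, if_pos hk]
        rw [he]
        exact cond_mix t (1-t) ht (by linarith) (fun l => hBnn i l) (fun l => hBnn a l)
          (fun l => hBnn b l) (condB i a) (condB i b)
      · by_cases hk' : k = b
        · have he : (fun l => (E * B) k l) = (fun l => (1-t) * B a l + t * B b l) := by
            funext l; rw [hM k l, if_neg hk, if_pos hk']
          rw [he]
          exact cond_mix (1-t) t (by linarith) ht (fun l => hBnn i l) (fun l => hBnn a l)
            (fun l => hBnn b l) (condB i a) (condB i b)
        · have he : (fun l => (E * B) k l) = (fun l => B k l) := by
            funext l; rw [hM k l, if_neg hk, if_neg hk']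
          rw [he]
          exact condB i k
    have h2 : ∀ j k, Cond (fun l => (E * B) j l) (fun l => (E * B) k l) := by
      intro j k
      by_cases hj : j = a
      · have he : (fun l => (E * B) j l) = (fun l => t * B a l + (1-t) * B b l) := by
          funext l; rw [hM j l, if_pos hj]
        rw [he]
        exact cond_symm (cond_mix t (1-t) ht (by linarith) (fun l => hMnn k l)
          (fun l => hBnn a l) (fun l => hBnn b l)
          (cond_symm (h1 a k)) (cond_symm (h1 b k)))
      · by_cases hj' : j = b
        · have he : (fun l => (E * B) j l) = (fun l => (1-t) * B a l + t * B b l) := by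
            funext l; rw [hM j l, if_neg hj, if_pos hj']
          rw [he]
          exact cond_symm (cond_mix (1-t) t (by linarith) ht (fun l => hMnn k l)
            (fun l => hBnn a l) (fun l => hBnn b l)
            (cond_symm (h1 a k)) (cond_symm (h1 b k)))
        · have he : (fun l => (E * B) j l) = (fun l => B j l) := by
            funext l; rw [hM j l, if_neg hj, if_neg hj']
          rw [he]
          exact h1 j k
    intro j k l₀
    exact h2 j k l₀

lemma bistochastic_transpose {d : ℕ} {B : Matrix (Fin d) (Fin d) ℝ}
    (h : Bistochastic B) : Bistochastic Bᵀ :=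
  ⟨fun j k => h.1 k j, fun j => h.2.2 j, fun k => h.2.1 k⟩

lemma bracelet_transpose {d : ℕ} {B : Matrix (Fin d) (Fin d) ℝ}
    (h : Bracelet B) : Bracelet Bᵀ := by
  obtain ⟨hb, hcol, hrow⟩ := h
  refine ⟨bistochastic_transpose hb, ?_, ?_⟩
  · intro k l j₀
    simpa only [Matrix.transpose_apply] using hrow k l j₀
  · intro j k l₀
    simpa only [Matrix.transpose_apply] using hcol j k l₀

lemma elementary_transpose {d : ℕ} {E : Matrix (Fin d) (Fin d) ℝ}
    (h : Elementary E) : Elementary Eᵀ := by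
  obtain ⟨hb, S, hc, hd'⟩ := h
  exact ⟨bistochastic_transpose hb, S, hc, fun k hk => by
    simpa only [Matrix.transpose_apply] using hd' k hk⟩

lemma elem_right {d : ℕ} {E B : Matrix (Fin d) (Fin d) ℝ}
    (hE : Elementary E) (hB : Bracelet B) : Bracelet (B * E) := by
  have h := elem_left (elementary_transpose hE) (bracelet_transpose hB)
  rw [← Matrix.transpose_mul] at h
  have := bracelet_transpose h
  rwa [Matrix.transpose_transpose] at this

lemma prod_left {d : ℕ} (L : List (Matrix (Fin d) (Fin d) ℝ)) (hL : ∀ E ∈ L, Elementary E) :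
    ∀ B : Matrix (Fin d) (Fin d) ℝ, Bracelet B → Bracelet (L.prod * B) := by
  induction L with
  | nil => intro B hB; simpa using hB
  | cons E L ih =>
    intro B hB
    rw [List.prod_cons, mul_assoc]
    exact elem_left (hL E List.mem_cons_self)
      (ih (fun E' hE' => hL E' (List.mem_cons_of_mem E hE')) B hB)

lemma prod_right {d : ℕ} (L : List (Matrix (Fin d) (Fin d) ℝ)) (hL : ∀ E ∈ L, Elementary E) :
    ∀ B : Matrix (Fin d) (Fin d) ℝ, Bracelet B → Bracelet (B * L.prod) := by
  induction L with
  | nil => intro B hB; simpa using hB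
  | cons E L ih =>
    intro B hB
    rw [List.prod_cons, ← mul_assoc]
    exact ih (fun E' hE' => hL E' (List.mem_cons_of_mem E hE')) (B * E)
      (elem_right (hL E List.mem_cons_self) hB)

lemma bracelet_isClosed {d : ℕ} : IsClosed {M : Matrix (Fin d) (Fin d) ℝ | Bracelet M} := by
  have hcont : ∀ (j k : Fin d), Continuous fun M : Matrix (Fin d) (Fin d) ℝ => M j k :=
    fun j k => (continuous_apply k).comp (continuous_apply j)
  have heq : {M : Matrix (Fin d) (Fin d) ℝ | Bracelet M} =
      (⋂ j, ⋂ k, {M : Matrix (Fin d) (Fin d) ℝ | 0 ≤ M j k}) ∩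
      (((⋂ j, {M : Matrix (Fin d) (Fin d) ℝ | ∑ k, M j k = 1}) ∩
        (⋂ k, {M : Matrix (Fin d) (Fin d) ℝ | ∑ j, M j k = 1})) ∩
       ((⋂ k, ⋂ l, ⋂ j₀, {M : Matrix (Fin d) (Fin d) ℝ |
          2 * Real.sqrt (M j₀ k * M j₀ l) ≤ ∑ j, Real.sqrt (M j k * M j l)}) ∩
        (⋂ j, ⋂ k, ⋂ l₀, {M : Matrix (Fin d) (Fin d) ℝ |
          2 * Real.sqrt (M j l₀ * M k l₀) ≤ ∑ l, Real.sqrt (M j l * M k l)}))) := by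
    ext M
    simp only [Set.mem_setOf_eq, Set.mem_inter_iff, Set.mem_iInter, Bracelet, Bistochastic]
    tauto
  rw [heq]
  refine IsClosed.inter ?_ (IsClosed.inter (IsClosed.inter ?_ ?_) (IsClosed.inter ?_ ?_))
  · exact isClosed_iInter fun j => isClosed_iInter fun k =>
      isClosed_le continuous_const (hcont j k)
  · exact isClosed_iInter fun j =>
      isClosed_eq (continuous_finset_sum _ fun k _ => hcont j k) continuous_const
  · exact isClosed_iInter fun k =>
      isClosed_eq (continuous_finset_sum _ fun j _ => hcont j k) continuous_const
  · exact isClosed_iInter fun k => isClosed_iInter fun l => isClosed_iInter fun j₀ =>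
      isClosed_le (continuous_const.mul (Real.continuous_sqrt.comp ((hcont j₀ k).mul (hcont j₀ l))))
        (continuous_finset_sum _ fun j _ => Real.continuous_sqrt.comp ((hcont j k).mul (hcont j l)))
  · exact isClosed_iInter fun j => isClosed_iInter fun k => isClosed_iInter fun l₀ =>
      isClosed_le (continuous_const.mul (Real.continuous_sqrt.comp ((hcont j l₀).mul (hcont k l₀))))
        (continuous_finset_sum _ fun l _ => Real.continuous_sqrt.comp ((hcont j l).mul (hcont k l)))

/-- If `A` is a factorisable bistochastic matrix and `B` is a bracelet bistochastic matrix,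
then both `A * B` and `B * A` are bracelet bistochastic matrices. -/
theorem factorisable_mul_bracelet {d : ℕ} (hd : 1 ≤ d)
    (A B : Matrix (Fin d) (Fin d) ℝ)
    (hA : Factorisable A) (hA' : Bistochastic A) (hB : Bracelet B) :
    Bracelet (A * B) ∧ Bracelet (B * A) := by
  constructor
  · have hmap : Set.MapsTo (fun M : Matrix (Fin d) (Fin d) ℝ => M * B)
        { M : Matrix (Fin d) (Fin d) ℝ |
          ∃ L : List (Matrix (Fin d) (Fin d) ℝ), (∀ E ∈ L, Elementary E) ∧ M = L.prod }
        {M : Matrix (Fin d) (Fin d) ℝ | Bracelet M} := by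
      rintro M ⟨L, hL, rfl⟩
      exact prod_left L hL B hB
    have h := map_mem_closure (Continuous.matrix_mul continuous_id continuous_const) hA hmap
    rwa [bracelet_isClosed.closure_eq] at h
  · have hmap : Set.MapsTo (fun M : Matrix (Fin d) (Fin d) ℝ => B * M)
        { M : Matrix (Fin d) (Fin d) ℝ |
          ∃ L : List (Matrix (Fin d) (Fin d) ℝ), (∀ E ∈ L, Elementary E) ∧ M = L.prod }
        {M : Matrix (Fin d) (Fin d) ℝ | Bracelet M} := by
      rintro M ⟨L, hL, rfl⟩
      exact prod_right L hL B hB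
    have h := map_mem_closure (Continuous.matrix_mul continuous_const continuous_id) hA hmap
    rwa [bracelet_isClosed.closure_eq] at h
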